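/- Let $c_1, \dots, c_s$ be distinct real numbers with associated Lagrange basis polynomials $\ell_i$ and weights $b_i = \int_0^1 \ell_i(\tau)\,d\tau$, and assume $b_i \neq 0$ for all $i$. Let $S \in \mathbb{R}^{N\times N}$ be skew-symmetric, $H : \mathbb{R}^N \to \mathbb{R}$ continuously differentiable, $t_0, h \in \mathbb{R}$, and let $v : \mathbb{R} \to \mathbb{R}^N$ be a polynomial map of degree at most $s$ satisfying the collocation conditions $\dot{v}(t_0 + c_i h) = \frac{1}{b_i}\int_0^1 \ell_i(\tau)\, S\,\nabla H(v(t_0 + \tau h))\,d\tau$ for $i = 1, \dots, s$. Then $H(v(t_0 + h)) = H(v(t_0))$. -/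

import Mathlib

open Matrix MeasureTheory

/-- Energy preservation of the energy-preserving collocation methods.
Given distinct nodes `c₁,…,c_s` with Lagrange basis polynomials `ℓᵢ` and nonzero weights
`bᵢ = ∫₀¹ ℓᵢ`, a skew-symmetric matrix `S`, a `C¹` Hamiltonian `H`, and a polynomial map
`v` of degree at most `s` satisfying the collocation conditions
`v̇(t₀ + cᵢ h) = (1/bᵢ) ∫₀¹ ℓᵢ(τ) S ∇H(v(t₀ + τ h)) dτ`, we have
`H(v(t₀ + h)) = H(v(t₀))`. -/
theorem energy_preserving_collocation
    {N s : ℕ}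
    (c : Fin s → ℝ) (hc : Function.Injective c)
    (ℓ : Fin s → ℝ → ℝ)
    (hℓ : ∀ i τ, ℓ i τ = ∏ j ∈ Finset.univ.erase i, (τ - c j) / (c i - c j))
    (b : Fin s → ℝ) (hb : ∀ i, b i = ∫ τ in (0:ℝ)..1, ℓ i τ)
    (hbne : ∀ i, b i ≠ 0)
    (S : Matrix (Fin N) (Fin N) ℝ) (hS : Sᵀ = -S)
    (H : (Fin N → ℝ) → ℝ) (gradH : (Fin N → ℝ) → (Fin N → ℝ))
    (hH : ContDiff ℝ 1 H)
    (hgradH : ∀ y w, (fderiv ℝ H y) w = dotProduct (gradH y) w)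
    (t₀ h : ℝ)
    (v : ℝ → (Fin N → ℝ))
    (hv : ∀ k, ∃ p : Polynomial ℝ, p.natDegree ≤ s ∧ ∀ t, v t k = p.eval t)
    (hcoll : ∀ i, HasDerivAt v
      ((b i)⁻¹ • ∫ τ in (0:ℝ)..1, ℓ i τ • S.mulVec (gradH (v (t₀ + τ * h))))
      (t₀ + c i * h)) :
    H (v (t₀ + h)) = H (v t₀) := by
  classical
  choose p hpdeg hpev using hv
  -- the derivative of `v`
  set v' : ℝ → Fin N → ℝ := fun t k => ((p k).derivative).eval t with hv'def
  have hdv : ∀ t, HasDerivAt v (v' t) t := by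
    intro t
    rw [hasDerivAt_pi]
    intro k
    have hk : (fun t => v t k) = fun t => (p k).eval t := by
      funext t; exact hpev k t
    rw [hk]
    exact (p k).hasDerivAt t
  have hlin : ∀ τ : ℝ, HasDerivAt (fun τ : ℝ => t₀ + τ * h) h τ := by
    intro τ
    simpa using ((hasDerivAt_id τ).mul_const h).const_add t₀
  have hu : ∀ τ : ℝ, HasDerivAt (fun τ => v (t₀ + τ * h)) (h • v' (t₀ + τ * h)) τ :=
    fun τ => (hdv (t₀ + τ * h)).scomp τ (hlin τ)
  -- the collocation values
  set d : Fin s → Fin N → ℝ := fun i => v' (t₀ + c i * h) with hddef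
  have hdcoll : ∀ i, d i =
      (b i)⁻¹ • ∫ τ in (0:ℝ)..1, ℓ i τ • S.mulVec (gradH (v (t₀ + τ * h))) :=
    fun i => (hdv _).unique (hcoll i)
  -- ℓ as evaluation of the Lagrange basis polynomials
  have hℓeval : ∀ i τ, ℓ i τ = (Lagrange.basis Finset.univ c i).eval τ := by
    intro i τ
    rw [hℓ, Lagrange.basis, Polynomial.eval_prod]
    refine Finset.prod_congr rfl fun j hj => ?_
    rw [Lagrange.basisDivisor]
    simp only [Polynomial.eval_mul, Polynomial.eval_C, Polynomial.eval_sub, Polynomial.eval_X]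
    ring
  -- the Lagrange interpolation identity for the derivative of v
  have hkey : ∀ τ : ℝ, v' (t₀ + τ * h) = ∑ i, ℓ i τ • d i := by
    intro τ
    funext k
    set q := (p k).derivative.comp (Polynomial.C t₀ + Polynomial.X * Polynomial.C h) with hqdef
    have hq : ∀ σ : ℝ, q.eval σ = v' (t₀ + σ * h) k := by
      intro σ
      simp only [hqdef, Polynomial.eval_comp, Polynomial.eval_add, Polynomial.eval_mul,
        Polynomial.eval_C, Polynomial.eval_X, hv'def]
    have hdeg : q.degree < (Finset.univ : Finset (Fin s)).card := by
      rw [Finset.card_univ, Fintype.card_fin]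
      rcases eq_or_ne q 0 with h0 | h0
      · rw [h0, Polynomial.degree_zero]; exact WithBot.bot_lt_coe s
      · have hd0 : (p k).derivative ≠ 0 := by
          intro hzero
          apply h0; rw [hqdef, hzero, Polynomial.zero_comp]
        have hp1 : 1 ≤ (p k).natDegree := by
          by_contra hh
          push_neg at hh
          have hnd : (p k).natDegree = 0 := by omega
          have h0' : (p k) = Polynomial.C ((p k).coeff 0) :=
            Polynomial.eq_C_of_natDegree_eq_zero hnd
          exact hd0 (by rw [h0']; simp)
        have hs1 : 1 ≤ s := le_trans hp1 (hpdeg k)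
        have h1 : q.natDegree ≤ (p k).derivative.natDegree *
            (Polynomial.C t₀ + Polynomial.X * Polynomial.C h).natDegree :=
          Polynomial.natDegree_comp_le
        have h2 : (Polynomial.C t₀ + Polynomial.X * Polynomial.C h).natDegree ≤ 1 := by
          refine le_trans (Polynomial.natDegree_add_le _ _) ?_
          simp only [Polynomial.natDegree_C, max_le_iff]
          refine ⟨Nat.zero_le _, le_trans Polynomial.natDegree_mul_le ?_⟩
          simp
        have h3 := Polynomial.natDegree_derivative_le (p k)
        have h4 := hpdeg k
        have hlt : q.natDegree < s := by
          have := le_trans h1 (Nat.mul_le_mul le_rfl h2)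
          omega
        rw [Polynomial.degree_eq_natDegree h0]
        exact_mod_cast hlt
    have hinterp := Lagrange.eq_interpolate (v := c) (s := Finset.univ) hc.injOn hdeg
    have heval := congrArg (Polynomial.eval τ) hinterp
    rw [Lagrange.interpolate_apply, Polynomial.eval_finset_sum] at heval
    calc v' (t₀ + τ * h) k = q.eval τ := (hq τ).symm
      _ = ∑ i, (Polynomial.C (q.eval (c i)) * Lagrange.basis Finset.univ c i).eval τ := heval
      _ = ∑ i, ℓ i τ * d i k := by
          refine Finset.sum_congr rfl fun i _ => ?_
          rw [Polynomial.eval_mul, Polynomial.eval_C, hq, hℓeval]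
          ring
      _ = (∑ i, ℓ i τ • d i) k := by
          rw [Finset.sum_apply]
          exact Finset.sum_congr rfl fun i _ => rfl
  -- continuity facts
  have hucont : Continuous fun τ : ℝ => v (t₀ + τ * h) := by
    refine continuous_pi fun k => ?_
    have hk : (fun τ : ℝ => v (t₀ + τ * h) k) = fun τ : ℝ => (p k).eval (t₀ + τ * h) := by
      funext τ; exact hpev k _
    rw [hk]
    exact (p k).continuous.comp ((continuous_const.add (continuous_id.mul continuous_const)))
  have hgradeq : gradH = fun y k => (fderiv ℝ H y) (Pi.single k 1) := by
    funext y k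
    rw [hgradH]
    simp
  have hgradcont : Continuous gradH := by
    rw [hgradeq]
    refine continuous_pi fun k => ?_
    exact (ContinuousLinearMap.apply ℝ ℝ (Pi.single k 1)).continuous.comp
      (hH.continuous_fderiv one_ne_zero)
  have hGcont : Continuous fun τ : ℝ => gradH (v (t₀ + τ * h)) := hgradcont.comp hucont
  have hℓcont : ∀ i, Continuous (ℓ i) := by
    intro i
    have hi : ℓ i = fun τ => ∏ j ∈ Finset.univ.erase i, (τ - c j) / (c i - c j) :=
      funext (hℓ i)
    rw [hi]
    exact continuous_finset_prod _ fun j _ =>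
      (continuous_id.sub continuous_const).div_const _
  -- weighted gradient averages
  set w : Fin s → Fin N → ℝ :=
    fun i => ∫ τ in (0:ℝ)..1, ℓ i τ • gradH (v (t₀ + τ * h)) with hwdef
  have hintw : ∀ i, IntervalIntegrable
      (fun τ => ℓ i τ • gradH (v (t₀ + τ * h))) volume 0 1 :=
    fun i => ((hℓcont i).smul hGcont).intervalIntegrable 0 1
  -- the matrix as a continuous linear map
  set L : (Fin N → ℝ) →L[ℝ] (Fin N → ℝ) :=
    LinearMap.toContinuousLinearMap (Matrix.mulVecLin S) with hLdef
  have hLapp : ∀ x, L x = S.mulVec x := fun x => rfl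
  have hSw : ∀ i, (∫ τ in (0:ℝ)..1, ℓ i τ • S.mulVec (gradH (v (t₀ + τ * h))))
      = S.mulVec (w i) := by
    intro i
    calc (∫ τ in (0:ℝ)..1, ℓ i τ • S.mulVec (gradH (v (t₀ + τ * h))))
        = ∫ τ in (0:ℝ)..1, L (ℓ i τ • gradH (v (t₀ + τ * h))) := by
          refine intervalIntegral.integral_congr fun τ _ => ?_
          rw [_root_.map_smul, hLapp]
      _ = L (∫ τ in (0:ℝ)..1, ℓ i τ • gradH (v (t₀ + τ * h))) :=
          L.intervalIntegral_comp_comm (hintw i)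
      _ = S.mulVec (w i) := hLapp _
  have hdw : ∀ i, d i = (b i)⁻¹ • S.mulVec (w i) := by
    intro i; rw [hdcoll i, hSw i]
  -- dot product with a fixed vector as a continuous linear map
  have hdot : ∀ i, (∫ τ in (0:ℝ)..1,
      ℓ i τ * dotProduct (gradH (v (t₀ + τ * h))) (d i)) = dotProduct (w i) (d i) := by
    intro i
    set T : (Fin N → ℝ) →L[ℝ] ℝ :=
      LinearMap.toContinuousLinearMap
        { toFun := fun x => dotProduct x (d i)
          map_add' := fun x y => add_dotProduct x y (d i)
          map_smul' := fun a x => smul_dotProduct a x (d i) } with hTdef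
    have hTapp : ∀ x, T x = dotProduct x (d i) := fun x => rfl
    calc (∫ τ in (0:ℝ)..1, ℓ i τ * dotProduct (gradH (v (t₀ + τ * h))) (d i))
        = ∫ τ in (0:ℝ)..1, T (ℓ i τ • gradH (v (t₀ + τ * h))) := by
          refine intervalIntegral.integral_congr fun τ _ => ?_
          rw [hTapp, smul_dotProduct, smul_eq_mul]
      _ = T (∫ τ in (0:ℝ)..1, ℓ i τ • gradH (v (t₀ + τ * h))) :=
          T.intervalIntegral_comp_comm (hintw i)
      _ = dotProduct (w i) (d i) := hTapp _
  -- each term vanishes by skew-symmetry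
  have hzero : ∀ i, dotProduct (w i) (d i) = 0 := by
    intro i
    rw [hdw i, dotProduct_smul]
    have ha : dotProduct (w i) (S.mulVec (w i)) = 0 := by
      have h1 : dotProduct (w i) (S.mulVec (w i))
          = dotProduct (Sᵀ.mulVec (w i)) (w i) := by
        rw [dotProduct_mulVec, Matrix.mulVec_transpose]
      rw [hS, Matrix.neg_mulVec, neg_dotProduct,
        dotProduct_comm (S.mulVec (w i)) (w i)] at h1
      linarith
    rw [ha, smul_zero]
  -- fundamental theorem of calculus
  have hφ : ∀ τ : ℝ, HasDerivAt (fun σ => H (v (t₀ + σ * h)))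
      (dotProduct (gradH (v (t₀ + τ * h))) (h • v' (t₀ + τ * h))) τ := by
    intro τ
    have h1 := ((hH.differentiable one_ne_zero (v (t₀ + τ * h))).hasFDerivAt).comp_hasDerivAt τ (hu τ)
    rw [hgradH] at h1
    exact h1
  have hv'cont : Continuous fun τ : ℝ => v' (t₀ + τ * h) := by
    refine continuous_pi fun k => ?_
    exact ((p k).derivative.continuous.comp
      ((continuous_const.add (continuous_id.mul continuous_const))))
  have hψcont : Continuous fun τ : ℝ =>
      dotProduct (gradH (v (t₀ + τ * h))) (h • v' (t₀ + τ * h)) := by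
    have he : ∀ τ : ℝ, dotProduct (gradH (v (t₀ + τ * h))) (h • v' (t₀ + τ * h))
        = ∑ k, gradH (v (t₀ + τ * h)) k * (h * v' (t₀ + τ * h) k) := fun τ => rfl
    rw [funext he]
    exact continuous_finset_sum _ fun k _ =>
      ((continuous_apply k).comp hGcont).mul
        (continuous_const.mul ((continuous_apply k).comp hv'cont))
  have hFTC := intervalIntegral.integral_eq_sub_of_hasDerivAt
    (f := fun σ => H (v (t₀ + σ * h)))
    (fun τ _ => hφ τ) (hψcont.intervalIntegrable 0 1)
  -- compute the integral
  have hsum : (∫ τ in (0:ℝ)..1,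
      dotProduct (gradH (v (t₀ + τ * h))) (h • v' (t₀ + τ * h))) = 0 := by
    have hrw : ∀ τ : ℝ, dotProduct (gradH (v (t₀ + τ * h))) (h • v' (t₀ + τ * h))
        = ∑ i, h * (ℓ i τ * dotProduct (gradH (v (t₀ + τ * h))) (d i)) := by
      intro τ
      have hdsum : dotProduct (gradH (v (t₀ + τ * h))) (∑ i, ℓ i τ • d i)
          = ∑ i, ℓ i τ * dotProduct (gradH (v (t₀ + τ * h))) (d i) := by
        simp only [dotProduct, Finset.sum_apply, Pi.smul_apply, smul_eq_mul,
          Finset.mul_sum]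
        rw [Finset.sum_comm]
        refine Finset.sum_congr rfl fun i _ => ?_
        refine Finset.sum_congr rfl fun k _ => ?_
        ring
      rw [dotProduct_smul, hkey τ, hdsum, smul_eq_mul, Finset.mul_sum]
    have hintterm : ∀ i : Fin s, IntervalIntegrable
        (fun τ => h * (ℓ i τ * dotProduct (gradH (v (t₀ + τ * h))) (d i)))
        volume 0 1 := by
      intro i
      refine (Continuous.intervalIntegrable ?_) 0 1
      have hdotc : Continuous fun τ : ℝ =>
          dotProduct (gradH (v (t₀ + τ * h))) (d i) := by
        have he : ∀ τ : ℝ, dotProduct (gradH (v (t₀ + τ * h))) (d i)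
            = ∑ k, gradH (v (t₀ + τ * h)) k * d i k := fun τ => rfl
        rw [funext he]
        exact continuous_finset_sum _ fun k _ =>
          ((continuous_apply k).comp hGcont).mul continuous_const
      exact continuous_const.mul ((hℓcont i).mul hdotc)
    rw [intervalIntegral.integral_congr (fun τ _ => hrw τ),
      intervalIntegral.integral_finset_sum (fun i _ => hintterm i)]
    refine Finset.sum_eq_zero fun i _ => ?_
    rw [intervalIntegral.integral_const_mul, hdot i, hzero i, mul_zero]
  rw [hsum] at hFTC
  simp only [one_mul, zero_mul, add_zero] at hFTC
  linarith
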